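/- Let $\lambda : A \times A \to (M, *)$ be a hermitian form, and let $(\lambda', \mu')$ be a quadratic form on an abelian group $A'$ with values in a quadratic group $(M'_e, M'_{ee}, h', p')$. Suppose $\alpha : A \to A'$ and $\beta_{ee} : M \to M'_{ee}$ are group homomorphisms such that $\beta_{ee}(m^*) = h'(p'(\beta_{ee}(m))) - \beta_{ee}(m)$ for all $m \in M$ and $\lambda'(\alpha(a_1), \alpha(a_2)) = \beta_{ee}(\lambda(a_1, a_2))$ for all $a_1, a_2 \in A$. Then there exists a unique group homomorphism $\beta_e : M \times_\lambda A \to M'_e$ such that $h' \circ \beta_e = \beta_{ee} \circ h_\lambda$, $\beta_e \circ p_\lambda = p' \circ \beta_{ee}$, and $\beta_e \circ \mu_\lambda = \mu' \circ \alpha$. -/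

import Mathlib

namespace CST

variable {A M : Type*} [AddCommGroup A] [AddCommGroup M]

/-- The underlying type of the central extension `M ×_lam A` determined by a
bilinear map `lam : A × A → M`. -/
def Ext (lam : A →+ A →+ M) : Type _ := M × A

namespace Ext

variable (lam : A →+ A →+ M)

/-- The element of `M ×_lam A` given by the pair `(m, a)`. -/
def mkE (m : M) (a : A) : Ext lam := (m, a)

instance : Add (Ext lam) :=
  ⟨fun x y => (x.1 + y.1 - lam x.2 y.2, x.2 + y.2)⟩

instance : Zero (Ext lam) := ⟨((0 : M), (0 : A))⟩

instance : Neg (Ext lam) :=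
  ⟨fun x => (-x.1 - lam x.2 x.2, -x.2)⟩

theorem add_def (x y : Ext lam) :
    x + y = (x.1 + y.1 - lam x.2 y.2, x.2 + y.2) := rfl

theorem zero_def : (0 : Ext lam) = ((0 : M), (0 : A)) := rfl

theorem neg_def (x : Ext lam) : -x = (-x.1 - lam x.2 x.2, -x.2) := rfl

/-- The operation `(m, a) + (m', a') = (m + m' - lam a a', a + a')` makes
`M ×_lam A` into a group. -/
instance : AddGroup (Ext lam) :=
  AddGroup.ofLeftAxioms
    (by
      intro x y z
      show ((x.1 + y.1 - lam x.2 y.2) + z.1 - lam (x.2 + y.2) z.2, (x.2 + y.2) + z.2) =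
        (x.1 + (y.1 + z.1 - lam y.2 z.2) - lam x.2 (y.2 + z.2), x.2 + (y.2 + z.2))
      refine Prod.ext ?_ ?_ <;> dsimp only <;> (try simp) <;> (try abel))
    (by
      intro x
      show ((0 : M) + x.1 - lam 0 x.2, (0 : A) + x.2) = x
      refine Prod.ext ?_ ?_ <;> dsimp only <;> simp)
    (by
      intro x
      show ((-x.1 - lam x.2 x.2) + x.1 - lam (-x.2) x.2, -x.2 + x.2) = ((0 : M), (0 : A))
      refine Prod.ext ?_ ?_ <;> dsimp only <;> (try simp) <;> (try abel))

/-- The function `h_lam (m, a) = m + m^* + lam a a`. -/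
def hfun (star : M →+ M) : Ext lam → M :=
  fun x => x.1 + star x.1 + lam x.2 x.2

/-- The function `p_lam m = (m, 0)`. -/
def pfun : M → Ext lam := fun m => mkE lam m 0

/-- The function `mu_lam a = (0, a)`. -/
def mufun : A → Ext lam := fun a => mkE lam 0 a

/-- The set of relations `(m^*, -a) - (m, a)` in `M ×_lam A`. -/
def relSet (star : M →+ M) : Set (Ext lam) :=
  {x | ∃ (m : M) (a : A), x = mkE lam (star m) (-a) - mkE lam m a}

end Ext

open Ext

/-- Universal property of the quadratic refinement
`(lam, mu_lam) : A → (M ×_lam A, M, h_lam, p_lam)` among quadratic forms. -/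
theorem universal_quadratic_refinement
    {A' Me' Mee' : Type*} [AddCommGroup A'] [AddGroup Me'] [AddCommGroup Mee']
    (lam : A →+ A →+ M) (star : M →+ M)
    (star_star : ∀ m : M, star (star m) = m)
    (herm : ∀ a a' : A, lam a' a = star (lam a a'))
    (h' : Me' →+ Mee') (p' : Mee' →+ Me')
    (p'_central : ∀ (x : Mee') (y : Me'), p' x + y = y + p' x)
    (hph' : ∀ x : Me', h' (p' (h' x)) = 2 • h' x)
    (lam' : A' →+ A' →+ Mee') (mu' : A' → Me')
    (mu'_add : ∀ a a' : A', mu' (a + a') = mu' a + mu' a' + p' (lam' a a'))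
    (h'_mu' : ∀ a : A', h' (mu' a) = lam' a a)
    (alpha : A →+ A') (bee : M →+ Mee')
    (bee_star : ∀ m : M, bee (star m) = h' (p' (bee m)) - bee m)
    (bee_lam : ∀ a1 a2 : A, lam' (alpha a1) (alpha a2) = bee (lam a1 a2)) :
    ∃! be : Ext lam →+ Me',
      (∀ (m : M) (a : A), h' (be (mkE lam m a)) = bee (m + star m + lam a a)) ∧
      (∀ m : M, be (mkE lam m 0) = p' (bee m)) ∧
      (∀ a : A, be (mkE lam 0 a) = mu' (alpha a)) := by
  have mu'_zero : mu' 0 = 0 := by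
    have := mu'_add 0 0
    simp only [add_zero, map_zero, AddMonoidHom.zero_apply] at this
    have h2 : mu' 0 + 0 = mu' 0 + mu' 0 := by rw [add_zero]; exact this
    exact (add_left_cancel h2).symm
  refine ⟨{ toFun := fun x => p' (bee x.1) + mu' (alpha x.2),
            map_zero' := by simp [zero_def, mu'_zero],
            map_add' := ?_ }, ⟨?_, ?_, ?_⟩, ?_⟩
  · intro x y
    simp only [add_def, map_add, map_sub, mu'_add, ← bee_lam]
    set L := p' (lam' (alpha x.2) (alpha y.2)) with hLdef
    set P := p' (bee x.1)
    set Q := p' (bee y.1) with hQdef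
    set m1 := mu' (alpha x.2)
    set m2 := mu' (alpha y.2)
    have hL : -L + (m1 + m2 + L) = m1 + m2 := by
      rw [← p'_central _ (m1 + m2), ← add_assoc, neg_add_cancel, zero_add]
    calc P + Q - L + (m1 + m2 + L) = P + Q + (-L + (m1 + m2 + L)) := by
            rw [sub_eq_add_neg, add_assoc]
      _ = P + (Q + (m1 + m2)) := by rw [hL, add_assoc]
      _ = P + (Q + m1 + m2) := by rw [add_assoc Q]
      _ = P + (m1 + Q + m2) := by rw [p'_central (bee y.1) m1]
      _ = P + m1 + (Q + m2) := by rw [add_assoc m1, ← add_assoc]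
  · intro m a
    simp only [AddMonoidHom.coe_mk, ZeroHom.coe_mk, mkE, map_add, h'_mu', bee_lam, bee_star]
    abel
  · intro m
    simp [mkE, mu'_zero]
  · intro a
    simp [mkE]
  · intro be ⟨_, hp, hmu⟩
    ext x
    have hx : x = mkE lam x.1 0 + mkE lam 0 x.2 := by
      show x = (x.1 + 0 - lam 0 x.2, 0 + x.2)
      refine Prod.ext ?_ ?_ <;> simp
    conv_lhs => rw [hx, map_add, hp, hmu]
    rfl

end CST
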